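/- Let K be a Kekulé cell over a finite set P. For every pair of elements g, g' ∈ K, the Hamming distance dist(g, g') is even and there is a finite set D of pairwise disjoint channels such that g' = g ⊕ (⊕D), dist(g, g') = 2 · #D, and in addition g ⊕ (⊕D') ∈ K for every subset D' ⊆ D. -/
import Mathlib


open scoped symmDiff

namespace Kekule

abbrev Node := ℕ
abbrev Graph := Finset (Finset Node)

/-- `G` is a graph: every edge is a 2-element set of nodes. -/
def IsGraph (G : Graph) : Prop := ∀ e ∈ G, e.card = 2

/-- The nodes of a graph: the elements of its edges. -/
def nodes (G : Graph) : Finset Node := G.biUnion id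

/-- The number of edges of `G` containing `v`. -/
def deg (G : Graph) (v : Node) : ℕ := (G.filter (fun e => v ∈ e)).card

/-- A port is a node contained in exactly one edge. -/
def ports (G : Graph) : Finset Node := (nodes G).filter (fun v => deg G v = 1)

/-- An internal node is a node that is not a port. -/
def internal (G : Graph) : Finset Node := (nodes G).filter (fun v => deg G v ≠ 1)

/-- A Kekulé state of `G`: a subgraph `W ⊆ G` such that every internal node
of `G` lies in exactly one edge of `W`. -/
def IsKekule (G W : Graph) : Prop := W ⊆ G ∧ ∀ v ∈ internal G, deg W v = 1

/-- A curve in `G`: a subgraph `C ⊆ G` such that every node of `C` that is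
internal in `G` lies in exactly two edges of `C`. -/
def IsCurve (G C : Graph) : Prop :=
  C ⊆ G ∧ ∀ v ∈ nodes C, v ∈ internal G → deg C v = 2

/-- `(C, W)` is an alternating curve in `G`: both are subgraphs of `G`,
`C` is a curve in `G`, and `W ∩ C` is a Kekulé state of `C`. -/
def IsAlternating (G C W : Graph) : Prop :=
  W ⊆ G ∧ IsCurve G C ∧ IsKekule C (W ∩ C)

/-- `W|P`: the set of ports in `P` that lie in some edge of `W`. -/
def rest (W : Graph) (P : Finset Node) : Finset Node := P ∩ nodes W

/-- The set of Kekulé port assignments of `G`. -/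
def KP (G : Graph) : Set (Finset Node) :=
  {g | ∃ W, IsKekule G W ∧ rest W (ports G) = g}

/-- A cell `K` over `P` is a Kekulé cell if it is the set of Kekulé port
assignments of some graph with port set `P`. -/
def IsKekuleCell (P : Finset Node) (K : Set (Finset Node)) : Prop :=
  ∃ G, IsGraph G ∧ ports G = P ∧ KP G = K

/-- A channel: a 2-element subset of `P`. -/
def IsChannel (P : Finset Node) (c : Finset Node) : Prop := c ⊆ P ∧ c.card = 2

/-- A port `p` is flexible for a cell `K`. -/
def Flexible (K : Set (Finset Node)) (p : Node) : Prop :=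
  ∃ g ∈ K, ∃ g' ∈ K, p ∈ g ∧ p ∉ g'

/-- Hamming distance between two port assignments. -/
def hdist (k k' : Finset Node) : ℕ := (k ∆ k').card

/-- The Hamming diameter of `K` equals `n`. -/
def HamDiamEq (K : Set (Finset Node)) (n : ℕ) : Prop :=
  (∃ k ∈ K, ∃ k' ∈ K, hdist k k' = n) ∧ ∀ k ∈ K, ∀ k' ∈ K, hdist k k' ≤ n

/-- `G` is connected: nonempty, and any two distinct nodes are joined by a walk. -/
def Connected (G : Graph) : Prop :=
  G.Nonempty ∧ ∀ p ∈ nodes G, ∀ q ∈ nodes G, p ≠ q →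
    ∃ (n : ℕ) (f : ℕ → Node), f 0 = p ∧ f n = q ∧
      ∀ i < n, ({f i, f (i + 1)} : Finset Node) ∈ G

/-- `C` is a simple path between `p` and `q`. -/
def IsSimplePath (C : Graph) (p q : Node) : Prop :=
  Connected C ∧ ports C = {p, q} ∧
    ∀ v ∈ nodes C, v ≠ p → v ≠ q → deg C v = 2

/-- A cycle: a connected graph all of whose nodes lie in exactly two edges. -/
def IsCycle (C : Graph) : Prop :=
  Connected C ∧ ∀ v ∈ nodes C, deg C v = 2

/-- A semi-Kekulé state of `G`: every internal node of `G` lies in an odd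
number of edges of `W`. -/
def IsSemiKekule (G W : Graph) : Prop :=
  W ⊆ G ∧ ∀ v ∈ internal G, deg W v % 2 = 1

/-- The signature of `G`. -/
def sig (G : Graph) : ℕ := (internal G).card % 2

/-- `G` is omniconjugated. -/
def Omniconjugated (G : Graph) : Prop :=
  2 ≤ (ports G).card ∧ KP G = {g | g ⊆ ports G ∧ g.card % 2 = sig G}

instance : Std.Commutative (α := Finset Node) (· ∆ ·) := ⟨symmDiff_comm⟩
instance : Std.Associative (α := Finset Node) (· ∆ ·) := ⟨symmDiff_assoc⟩

/-- The `⊕`-sum of a finite family of port assignments. -/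
def xorSum (D : Finset (Finset Node)) : Finset Node := D.fold (· ∆ ·) ∅ id


def edgesAt (Z : Graph) (v : Node) : Graph := Z.filter (fun e => v ∈ e)

lemma deg_eq (Z : Graph) (v : Node) : deg Z v = (edgesAt Z v).card := rfl

lemma mem_edgesAt {Z : Graph} {v : Node} {e : Finset Node} :
    e ∈ edgesAt Z v ↔ e ∈ Z ∧ v ∈ e := Finset.mem_filter

lemma mem_nodes {Z : Graph} {v : Node} : v ∈ nodes Z ↔ ∃ e ∈ Z, v ∈ e := by
  simp [nodes]

lemma mem_nodes_iff_edgesAt {Z : Graph} {v : Node} :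
    v ∈ nodes Z ↔ (edgesAt Z v).Nonempty := by
  simp [mem_nodes, edgesAt, Finset.filter_nonempty_iff, Finset.Nonempty]

lemma nodes_mono {X Y : Graph} (h : X ⊆ Y) : nodes X ⊆ nodes Y := by
  intro v hv; rw [mem_nodes] at *; obtain ⟨e, he, hve⟩ := hv; exact ⟨e, h he, hve⟩

lemma edgesAt_subset {Z : Graph} {v : Node} : edgesAt Z v ⊆ Z := Finset.filter_subset _ _

lemma edgesAt_eq_empty {Z : Graph} {v : Node} (h : v ∉ nodes Z) : edgesAt Z v = ∅ := by
  rw [← Finset.not_nonempty_iff_eq_empty, ← mem_nodes_iff_edgesAt]; exact h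

lemma edgesAt_symmDiff (X Y : Graph) (v : Node) :
    edgesAt (X ∆ Y) v = edgesAt X v ∆ edgesAt Y v := by
  ext e; simp only [mem_edgesAt, Finset.mem_symmDiff, mem_edgesAt]; tauto

lemma edgesAt_sdiff (X Y : Graph) (v : Node) :
    edgesAt (X \ Y) v = edgesAt X v \ edgesAt Y v := by
  ext e; simp only [mem_edgesAt, Finset.mem_sdiff, mem_edgesAt]; tauto

lemma edgesAt_erase (Z : Graph) (e : Finset Node) (v : Node) :
    edgesAt (Z.erase e) v = (edgesAt Z v).erase e := by
  ext f; simp only [mem_edgesAt, Finset.mem_erase]; tauto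

lemma deg_mono {X Y : Graph} (h : X ⊆ Y) (v : Node) : deg X v ≤ deg Y v := by
  rw [deg_eq, deg_eq]
  exact Finset.card_le_card (fun e he => mem_edgesAt.mpr ⟨h (mem_edgesAt.mp he).1, (mem_edgesAt.mp he).2⟩)

lemma mem_ports {G : Graph} {r : Node} : r ∈ ports G ↔ r ∈ nodes G ∧ deg G r = 1 :=
  Finset.mem_filter

lemma mem_internal {G : Graph} {r : Node} : r ∈ internal G ↔ r ∈ nodes G ∧ deg G r ≠ 1 :=
  Finset.mem_filter

lemma port_edge {G : Graph} {r : Node} (hr : r ∈ ports G) : ∃ e, edgesAt G r = {e} :=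
  Finset.card_eq_one.mp ((mem_ports.mp hr).2)

lemma port_mem_nodes {X G : Graph} {r : Node} {e : Finset Node}
    (hX : X ⊆ G) (hr : edgesAt G r = {e}) : r ∈ nodes X ↔ e ∈ X := by
  constructor
  · intro h
    obtain ⟨f, hf, hrf⟩ := mem_nodes.mp h
    have hfe : f ∈ edgesAt G r := mem_edgesAt.mpr ⟨hX hf, hrf⟩
    rw [hr, Finset.mem_singleton] at hfe
    exact hfe ▸ hf
  · intro h
    have : e ∈ edgesAt G r := by rw [hr]; exact Finset.mem_singleton_self e
    exact mem_nodes.mpr ⟨e, h, (mem_edgesAt.mp this).2⟩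

lemma nodes_singleton (e : Finset Node) : nodes {e} = e := by simp [nodes]

lemma nodes_insert (e : Finset Node) (X : Graph) : nodes (insert e X) = e ∪ nodes X := by
  simp [nodes]


/-- Path tracing: in a graph of max degree 2, from a degree-1 node `p` we can
trace out a whole connected component `Zp` whose degree-1 nodes are exactly
`p` and another degree-1 node `q`. -/
lemma trace : ∀ (n : ℕ) (Z : Graph), Z.card ≤ n → IsGraph Z →
    (∀ v ∈ nodes Z, deg Z v ≤ 2) → ∀ p, deg Z p = 1 →
    ∃ (q : Node) (Zp : Graph), Zp ⊆ Z ∧ p ≠ q ∧ p ∈ nodes Zp ∧ q ∈ nodes Zp ∧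
      deg Z q = 1 ∧
      (∀ e ∈ Z, ∀ v ∈ e, v ∈ nodes Zp → e ∈ Zp) ∧
      (∀ v ∈ nodes Zp, deg Z v = 1 → v = p ∨ v = q) := by
  intro n
  induction n with
  | zero =>
    intro Z hcard _ _ p hp
    have hcard : Z = ∅ := Finset.card_eq_zero.mp (Nat.le_zero.mp hcard)
    subst hcard
    simp [deg] at hp
  | succ n ih =>
    intro Z hcard hZ hdeg2 p hp
    -- the unique edge at p
    obtain ⟨e, he⟩ : ∃ e, edgesAt Z p = {e} := Finset.card_eq_one.mp hp
    have heZ : e ∈ Z := by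
      have : e ∈ edgesAt Z p := by rw [he]; exact Finset.mem_singleton_self e
      exact (mem_edgesAt.mp this).1
    have hpe : p ∈ e := by
      have : e ∈ edgesAt Z p := by rw [he]; exact Finset.mem_singleton_self e
      exact (mem_edgesAt.mp this).2
    obtain ⟨a, b, hab, habe⟩ := Finset.card_eq_two.mp (hZ e heZ)
    -- v: the other endpoint of e
    obtain ⟨v, hvp, hev⟩ : ∃ v, v ≠ p ∧ e = {p, v} := by
      subst habe
      rcases Finset.mem_insert.mp hpe with h | h
      · subst h; exact ⟨b, Ne.symm hab, rfl⟩
      · rw [Finset.mem_singleton] at h; subst h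
        exact ⟨a, hab, Finset.pair_comm a p⟩
    have hve : v ∈ e := by rw [hev]; exact Finset.mem_insert_of_mem (Finset.mem_singleton_self v)
    have hmem_e : ∀ w ∈ e, w = p ∨ w = v := by
      intro w hw; rw [hev] at hw
      rcases Finset.mem_insert.mp hw with h | h
      · exact Or.inl h
      · exact Or.inr (Finset.mem_singleton.mp h)
    have hvZ : v ∈ nodes Z := mem_nodes.mpr ⟨e, heZ, hve⟩
    by_cases hdv : deg Z v = 1
    · -- component is the single edge e
      refine ⟨v, {e}, ?_, fun h => hvp h.symm, ?_, ?_, hdv, ?_, ?_⟩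
      · intro f hf; rw [Finset.mem_singleton] at hf; exact hf ▸ heZ
      · rw [nodes_singleton]; exact hpe
      · rw [nodes_singleton]; exact hve
      · intro f hf w hwf hw
        rw [nodes_singleton] at hw
        rcases hmem_e w hw with h | h
        · subst h
          have : f ∈ edgesAt Z w := mem_edgesAt.mpr ⟨hf, hwf⟩
          rw [he, Finset.mem_singleton] at this
          rw [this]; exact Finset.mem_singleton_self e
        · subst h
          have hdv' : (edgesAt Z w).card = 1 := hdv
          obtain ⟨e', he'⟩ := Finset.card_eq_one.mp hdv'
          have h1 : f ∈ edgesAt Z w := mem_edgesAt.mpr ⟨hf, hwf⟩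
          have h2 : e ∈ edgesAt Z w := mem_edgesAt.mpr ⟨heZ, hve⟩
          rw [he', Finset.mem_singleton] at h1 h2
          rw [Finset.mem_singleton, h1, h2]
      · intro w hw _
        rw [nodes_singleton] at hw
        exact hmem_e w hw
    · -- deg Z v = 2; recurse on Z.erase e
      have hdv2 : deg Z v = 2 := by
        have h1 : 1 ≤ deg Z v := by
          rw [deg_eq]
          exact Finset.card_pos.mpr ⟨e, mem_edgesAt.mpr ⟨heZ, hve⟩⟩
        have h2 := hdeg2 v hvZ
        omega
      set Z' := Z.erase e with hZ'
      have hZ'sub : Z' ⊆ Z := Finset.erase_subset e Z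
      have hdegZ'v : deg Z' v = 1 := by
        rw [deg_eq, hZ', edgesAt_erase, Finset.card_erase_of_mem (mem_edgesAt.mpr ⟨heZ, hve⟩)]
        rw [← deg_eq, hdv2]
      have hcard' : Z'.card ≤ n := by
        have h1 : Z'.card = Z.card - 1 := by rw [hZ']; exact Finset.card_erase_of_mem heZ
        have h2 : 0 < Z.card := Finset.card_pos.mpr ⟨e, heZ⟩
        omega
      have hpZ' : p ∉ nodes Z' := by
        rw [mem_nodes_iff_edgesAt, hZ', edgesAt_erase, he]
        simp
      obtain ⟨q, Zp', hZp'sub, hvq, hvZp', hqZp', hdq', hclos', hchar'⟩ :=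
        ih Z' hcard' (fun f hf => hZ f (hZ'sub hf))
          (fun w hw => le_trans (deg_mono hZ'sub w) (hdeg2 w (nodes_mono hZ'sub hw))) v hdegZ'v
      have hqZ' : q ∈ nodes Z' := nodes_mono hZp'sub hqZp'
      have hqp : q ≠ p := fun h => hpZ' (h ▸ hqZ')
      have hqe : q ∉ e := by
        intro h
        rcases hmem_e q h with h' | h'
        · exact hqp h'
        · exact hvq h'.symm
      have hedgesAt_eq : ∀ w, w ∉ e → edgesAt Z' w = edgesAt Z w := by
        intro w hwe
        rw [hZ', edgesAt_erase, Finset.erase_eq_of_notMem]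
        intro h; exact hwe (mem_edgesAt.mp h).2
      refine ⟨q, insert e Zp', ?_, hqp.symm, ?_, ?_, ?_, ?_, ?_⟩
      · exact Finset.insert_subset heZ (fun f hf => hZ'sub (hZp'sub hf))
      · rw [nodes_insert]; exact Finset.mem_union_left _ hpe
      · rw [nodes_insert]; exact Finset.mem_union_right _ hqZp'
      · rw [deg_eq, ← hedgesAt_eq q hqe, ← deg_eq]; exact hdq'
      · -- closure
        intro f hf w hwf hw
        rw [nodes_insert, Finset.mem_union] at hw
        by_cases hfe : f = e
        · rw [hfe]; exact Finset.mem_insert_self e _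
        · have hfZ' : f ∈ Z' := Finset.mem_erase.mpr ⟨hfe, hf⟩
          rcases hw with hw | hw
          · rcases hmem_e w hw with h | h
            · subst h
              have : f ∈ edgesAt Z w := mem_edgesAt.mpr ⟨hf, hwf⟩
              rw [he, Finset.mem_singleton] at this
              exact absurd this hfe
            · subst h
              exact Finset.mem_insert_of_mem (hclos' f hfZ' w hwf hvZp')
          · exact Finset.mem_insert_of_mem (hclos' f hfZ' w hwf hw)
      · -- degree-1 characterization
        intro w hw hdw
        rw [nodes_insert, Finset.mem_union] at hw
        by_cases hwe : w ∈ e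
        · rcases hmem_e w hwe with h | h
          · exact Or.inl h
          · subst h; omega
        · rcases hw with hw | hw
          · exact absurd hw hwe
          · have : deg Z' w = 1 := by rw [deg_eq, hedgesAt_eq w hwe, ← deg_eq]; exact hdw
            rcases hchar' w hw this with h | h
            · subst h; exact absurd hve hwe
            · exact Or.inr h

lemma symmDiff_subset_union' {α : Type*} [DecidableEq α] {X Y : Finset α} :
    X ∆ Y ⊆ X ∪ Y := by
  intro e he
  rw [Finset.mem_symmDiff] at he
  rcases he with ⟨h, _⟩ | ⟨h, _⟩
  · exact Finset.mem_union_left _ h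
  · exact Finset.mem_union_right _ h

lemma symmDiff_empty' {α : Type*} [DecidableEq α] (s : Finset α) : s ∆ ∅ = s := by
  ext a; simp [Finset.mem_symmDiff]

lemma symmDiff_cancel_left' {α : Type*} [DecidableEq α] (A B : Finset α) :
    A ∆ (A ∆ B) = B := by
  ext a; simp only [Finset.mem_symmDiff]; tauto

lemma symmDiff_cancel_right' {α : Type*} [DecidableEq α] (A B : Finset α) :
    B ∆ (A ∆ B) = A := by
  ext a; simp only [Finset.mem_symmDiff]; tauto

lemma rest_subset (W : Graph) (P : Finset Node) : rest W P ⊆ P :=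
  Finset.inter_subset_left

lemma rest_symmDiff {G X Y : Graph} (hX : X ⊆ G) (hY : Y ⊆ G) :
    rest (X ∆ Y) (ports G) = rest X (ports G) ∆ rest Y (ports G) := by
  ext r
  by_cases hr : r ∈ ports G
  · obtain ⟨e, he⟩ := port_edge hr
    have h1 := port_mem_nodes hX he
    have h2 := port_mem_nodes hY he
    have h3 := port_mem_nodes (Finset.Subset.trans symmDiff_subset_union'
      (Finset.union_subset hX hY)) he
    simp only [rest, Finset.mem_symmDiff, Finset.mem_inter, h1, h2, h3,
      Finset.mem_symmDiff]
    tauto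
  · simp only [rest, Finset.mem_symmDiff, Finset.mem_inter, hr]
    tauto

lemma internal_deg_symmDiff {G W W' : Graph} (hW : IsKekule G W) (hW' : IsKekule G W')
    {v : Node} (hv : v ∈ internal G) : deg (W ∆ W') v = 0 ∨ deg (W ∆ W') v = 2 := by
  obtain ⟨a, ha⟩ := Finset.card_eq_one.mp (show (edgesAt W v).card = 1 from hW.2 v hv)
  obtain ⟨b, hb⟩ := Finset.card_eq_one.mp (show (edgesAt W' v).card = 1 from hW'.2 v hv)
  rw [deg_eq, edgesAt_symmDiff, ha, hb]
  by_cases hab : a = b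
  · left; rw [hab, symmDiff_self]; simp
  · right
    have : ({a} : Graph) ∆ {b} = {a, b} := by
      ext f
      simp only [Finset.mem_symmDiff, Finset.mem_singleton, Finset.mem_insert]
      constructor
      · rintro (⟨h, _⟩ | ⟨h, _⟩) <;> simp [h]
      · rintro (h | h)
        · exact Or.inl ⟨h, fun hh => hab (h ▸ hh ▸ rfl)⟩
        · exact Or.inr ⟨h, fun hh => hab (hh.symm ▸ h ▸ rfl)⟩
    rw [this, Finset.card_pair hab]

/-- The main inductive lemma. -/
lemma main : ∀ (n : ℕ) (G W W' : Graph), IsGraph G → IsKekule G W → IsKekule G W' →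
    (W ∆ W').card ≤ n →
    ∃ D : Finset (Finset Node),
      (∀ c ∈ D, c ⊆ rest W (ports G) ∆ rest W' (ports G) ∧ c.card = 2) ∧
      (D : Set (Finset Node)).Pairwise Disjoint ∧
      rest W' (ports G) = rest W (ports G) ∆ xorSum D ∧
      (rest W (ports G) ∆ rest W' (ports G)).card = 2 * D.card ∧
      (∀ D' ⊆ D, ∃ V, IsKekule G V ∧ V ∆ W' ⊆ W ∆ W' ∧
        rest V (ports G) = rest W (ports G) ∆ xorSum D') := by
  have trivial_case : ∀ (G W W' : Graph), IsKekule G W →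
      rest W (ports G) = rest W' (ports G) →
      ∃ D : Finset (Finset Node),
      (∀ c ∈ D, c ⊆ rest W (ports G) ∆ rest W' (ports G) ∧ c.card = 2) ∧
      (D : Set (Finset Node)).Pairwise Disjoint ∧
      rest W' (ports G) = rest W (ports G) ∆ xorSum D ∧
      (rest W (ports G) ∆ rest W' (ports G)).card = 2 * D.card ∧
      (∀ D' ⊆ D, ∃ V, IsKekule G V ∧ V ∆ W' ⊆ W ∆ W' ∧
        rest V (ports G) = rest W (ports G) ∆ xorSum D') := by
    intro G W W' hW hr
    refine ⟨∅, by simp, by simp, ?_, ?_, ?_⟩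
    · rw [← hr, show xorSum ∅ = ∅ from rfl, symmDiff_empty']
    · rw [← hr]; simp
    · intro D' hD'
      rw [Finset.subset_empty] at hD'
      subst hD'
      exact ⟨W, hW, Finset.Subset.refl _, by
        rw [show xorSum ∅ = ∅ from rfl, symmDiff_empty']⟩
  intro n
  induction n with
  | zero =>
    intro G W W' hG hW hW' hcard
    have h : W ∆ W' = ∅ := Finset.card_eq_zero.mp (Nat.le_zero.mp hcard)
    have hWW' : W = W' := symmDiff_eq_bot.mp h
    exact trivial_case G W W' hW (by rw [hWW'])
  | succ n ih =>
    intro G W W' hG hW hW' hcard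
    obtain ⟨P, hP⟩ : ∃ P, P = ports G := ⟨_, rfl⟩
    obtain ⟨g, hg⟩ : ∃ g, g = rest W P := ⟨_, rfl⟩
    obtain ⟨g', hg'⟩ : ∃ g', g' = rest W' P := ⟨_, rfl⟩
    rw [hP] at hg hg'
    rw [← hg, ← hg']
    by_cases hgg : g ∆ g' = ∅
    · rw [hg, hg']
      exact trivial_case G W W' hW (by rw [← hg, ← hg']; exact symmDiff_eq_bot.mp hgg)
    obtain ⟨Z, hZdef⟩ : ∃ Z, Z = W ∆ W' := ⟨_, rfl⟩
    rw [← hZdef] at hcard ⊢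
    have hZsubG : Z ⊆ G := by
      rw [hZdef]
      exact Finset.Subset.trans symmDiff_subset_union' (Finset.union_subset hW.1 hW'.1)
    have hZgraph : IsGraph Z := fun e he => hG e (hZsubG he)
    have hnodes_cases : ∀ v ∈ nodes G, v ∈ ports G ∨ v ∈ internal G := by
      intro v hv
      by_cases h : deg G v = 1
      · exact Or.inl (mem_ports.mpr ⟨hv, h⟩)
      · exact Or.inr (mem_internal.mpr ⟨hv, h⟩)
    have hdeg2 : ∀ v ∈ nodes Z, deg Z v ≤ 2 := by
      intro v hv
      have hvG : v ∈ nodes G := nodes_mono hZsubG hv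
      rcases hnodes_cases v hvG with h | h
      · calc deg Z v ≤ deg G v := deg_mono hZsubG v
          _ = 1 := (mem_ports.mp h).2
          _ ≤ 2 := by omega
      · rcases internal_deg_symmDiff hW hW' h with h2 | h2 <;>
          rw [← hZdef] at h2 <;> omega
    have hrestZ : rest Z (ports G) = g ∆ g' := by
      rw [hZdef, hg, hg']
      exact rest_symmDiff hW.1 hW'.1
    have hggP : g ∆ g' ⊆ ports G := by
      rw [hg, hg']
      exact Finset.Subset.trans symmDiff_subset_union'
        (Finset.union_subset (rest_subset _ _) (rest_subset _ _))
    -- pick p in g ∆ g'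
    obtain ⟨p, hpgg⟩ := Finset.nonempty_iff_ne_empty.mpr hgg
    have hpP : p ∈ ports G := hggP hpgg
    have hpnZ : p ∈ nodes Z := by
      have : p ∈ rest Z (ports G) := by rw [hrestZ]; exact hpgg
      exact Finset.mem_of_mem_inter_right this
    have port_degZ : ∀ r ∈ ports G, r ∈ nodes Z → deg Z r = 1 := by
      intro r hrP hrZ
      have h1 : 1 ≤ deg Z r :=
        Finset.card_pos.mpr (mem_nodes_iff_edgesAt.mp hrZ)
      have h2 : deg Z r ≤ deg G r := deg_mono hZsubG r
      have h3 : deg G r = 1 := (mem_ports.mp hrP).2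
      omega
    have hdegZp : deg Z p = 1 := port_degZ p hpP hpnZ
    -- trace the path component from p
    obtain ⟨q, Zp, hZpZ, hpq, hpZp, hqZp, hdegZq, hclos, hchar⟩ :=
      trace Z.card Z le_rfl hZgraph hdeg2 p hdegZp
    have hZpG : Zp ⊆ G := Finset.Subset.trans hZpZ hZsubG
    have hqnZ : q ∈ nodes Z := nodes_mono hZpZ hqZp
    have hqP : q ∈ ports G := by
      have hqG : q ∈ nodes G := nodes_mono hZsubG hqnZ
      rcases hnodes_cases q hqG with h | h
      · exact h
      · rcases internal_deg_symmDiff hW hW' h with h2 | h2 <;>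
          rw [← hZdef] at h2 <;> omega
    have hqgg : q ∈ g ∆ g' := by
      rw [← hrestZ]
      exact Finset.mem_inter.mpr ⟨hqP, hqnZ⟩
    -- port restriction of the component
    have restZp : rest Zp (ports G) = {p, q} := by
      ext r
      simp only [rest, Finset.mem_inter, Finset.mem_insert, Finset.mem_singleton]
      constructor
      · rintro ⟨hrP, hrZp⟩
        exact hchar r hrZp (port_degZ r hrP (nodes_mono hZpZ hrZp))
      · rintro (h | h)
        · subst h; exact ⟨hpP, hpZp⟩
        · subst h; exact ⟨hqP, hqZp⟩
    -- component closure for edges at nodes of Zp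
    have hcomp : ∀ v ∈ nodes Zp, edgesAt Zp v = edgesAt Z v := by
      intro v hv
      apply Finset.Subset.antisymm
      · intro f hf
        exact mem_edgesAt.mpr ⟨hZpZ (mem_edgesAt.mp hf).1, (mem_edgesAt.mp hf).2⟩
      · intro f hf
        obtain ⟨hfZ, hvf⟩ := mem_edgesAt.mp hf
        exact mem_edgesAt.mpr ⟨hclos f hfZ v hvf hv, hvf⟩
    -- toggling the whole component preserves Kekulé states
    have toggle : ∀ V : Graph, IsKekule G V →
        (∀ v ∈ nodes Zp, v ∈ internal G →
          edgesAt V v = edgesAt W v ∨ edgesAt V v = edgesAt W' v) →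
        IsKekule G (V ∆ Zp) := by
      intro V hV hloc
      constructor
      · exact Finset.Subset.trans symmDiff_subset_union' (Finset.union_subset hV.1 hZpG)
      · intro v hv
        rw [deg_eq, edgesAt_symmDiff]
        by_cases hvZp : v ∈ nodes Zp
        · rw [hcomp v hvZp, hZdef, edgesAt_symmDiff]
          rcases hloc v hvZp hv with h | h
          · rw [h, symmDiff_cancel_left', ← deg_eq]
            exact hW'.2 v hv
          · rw [h, symmDiff_cancel_right', ← deg_eq]
            exact hW.2 v hv
        · rw [edgesAt_eq_empty hvZp, symmDiff_empty', ← deg_eq]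
          exact hV.2 v hv
    -- the new Kekulé state
    obtain ⟨W₁, hW₁def⟩ : ∃ W₁, W₁ = W ∆ Zp := ⟨_, rfl⟩
    have hW₁ : IsKekule G W₁ := by
      rw [hW₁def]; exact toggle W hW (fun v _ _ => Or.inl rfl)
    have hW₁W' : W₁ ∆ W' = Z \ Zp := by
      rw [hW₁def, symmDiff_right_comm, ← hZdef, symmDiff_of_ge hZpZ]
    have hZpne : Zp.Nonempty := by
      obtain ⟨e, he, _⟩ := mem_nodes.mp hpZp
      exact ⟨e, he⟩
    have hcard' : (W₁ ∆ W').card ≤ n := by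
      rw [hW₁W', Finset.card_sdiff_of_subset hZpZ]
      have h1 : 1 ≤ Zp.card := Finset.card_pos.mpr hZpne
      have h2 : Z.card ≤ n + 1 := hcard
      omega
    obtain ⟨c, hc⟩ : ∃ c : Finset Node, c = {p, q} := ⟨_, rfl⟩
    have hcard_c : c.card = 2 := by rw [hc]; exact Finset.card_pair hpq
    have hg₁ : rest W₁ (ports G) = g ∆ c := by
      rw [hW₁def, rest_symmDiff hW.1 hZpG, restZp, ← hg, ← hc]
    have hcsub : c ⊆ g ∆ g' := by
      rw [hc]
      intro r hr
      rcases Finset.mem_insert.mp hr with h | h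
      · exact h ▸ hpgg
      · exact (Finset.mem_singleton.mp h) ▸ hqgg
    -- apply the induction hypothesis
    obtain ⟨D₀, hD₀chan, hD₀pd, hD₀sum, hD₀card, hD₀sub⟩ :=
      ih G W₁ W' hG hW₁ hW' hcard'
    rw [hg₁, ← hg'] at hD₀sum
    simp only [hg₁, ← hg'] at hD₀chan hD₀card hD₀sub
    have hg₁gg : (g ∆ c) ∆ g' = (g ∆ g') \ c := by
      rw [symmDiff_right_comm, symmDiff_of_ge hcsub]
    rw [hg₁gg] at hD₀card
    simp only [hg₁gg] at hD₀chan
    have hpc : p ∈ c := by rw [hc]; exact Finset.mem_insert_self p {q}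
    have hcD₀ : c ∉ D₀ := by
      intro h
      exact (Finset.mem_sdiff.mp ((hD₀chan c h).1 hpc)).2 hpc
    refine ⟨insert c D₀, ?_, ?_, ?_, ?_, ?_⟩
    · -- channels
      intro c' hc'
      rcases Finset.mem_insert.mp hc' with h | h
      · exact h ▸ ⟨hcsub, hcard_c⟩
      · exact ⟨Finset.Subset.trans (hD₀chan c' h).1 Finset.sdiff_subset, (hD₀chan c' h).2⟩
    · -- pairwise disjoint
      intro x hx y hy hxy
      rw [Finset.coe_insert, Set.mem_insert_iff] at hx hy
      have hdisj : ∀ z ∈ D₀, Disjoint c z := by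
        intro z hz
        rw [Finset.disjoint_left]
        intro a hac haz
        exact (Finset.mem_sdiff.mp ((hD₀chan z hz).1 haz)).2 hac
      rcases hx with hx | hx <;> rcases hy with hy | hy
      · exact absurd (hx.trans hy.symm) hxy
      · exact hx ▸ hdisj y hy
      · exact hy ▸ (hdisj x hx).symm
      · exact hD₀pd hx hy hxy
    · -- sum
      rw [show xorSum (insert c D₀) = c ∆ xorSum D₀ from Finset.fold_insert hcD₀,
        ← symmDiff_assoc]
      exact hD₀sum
    · -- cardinality
      rw [Finset.card_insert_of_notMem hcD₀]
      have h1 : ((g ∆ g') \ c).card = (g ∆ g').card - c.card := Finset.card_sdiff_of_subset hcsub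
      have h2 : c.card ≤ (g ∆ g').card := Finset.card_le_card hcsub
      omega
    · -- subsets
      intro D' hD'
      have hD'' : D'.erase c ⊆ D₀ := by
        intro x hx
        obtain ⟨hxc, hxD'⟩ := Finset.mem_erase.mp hx
        rcases Finset.mem_insert.mp (hD' hxD') with h | h
        · exact absurd h hxc
        · exact h
      obtain ⟨V, hVk, hVsub, hVrest⟩ := hD₀sub (D'.erase c) hD''
      rw [hW₁W'] at hVsub
      by_cases hcD' : c ∈ D'
      · refine ⟨V, hVk, ?_, ?_⟩
        · exact Finset.Subset.trans hVsub Finset.sdiff_subset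
        · have hxs : xorSum D' = c ∆ xorSum (D'.erase c) := by
            conv_lhs => rw [← Finset.insert_erase hcD']
            exact Finset.fold_insert (Finset.notMem_erase c D')
          rw [hVrest, hxs, symmDiff_assoc]
      · -- toggle the component back
        have hDe : D'.erase c = D' := Finset.erase_eq_of_notMem hcD'
        rw [hDe] at hVrest
        have hloc : ∀ v ∈ nodes Zp, v ∈ internal G →
            edgesAt V v = edgesAt W v ∨ edgesAt V v = edgesAt W' v := by
          intro v hvZp _
          right
          have h1 : edgesAt (V ∆ W') v = ∅ := by
            have h2 : edgesAt (V ∆ W') v ⊆ edgesAt (Z \ Zp) v := by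
              intro f hf
              exact mem_edgesAt.mpr ⟨hVsub (mem_edgesAt.mp hf).1, (mem_edgesAt.mp hf).2⟩
            rw [edgesAt_sdiff, hcomp v hvZp, Finset.sdiff_self] at h2
            exact Finset.subset_empty.mp h2
          rw [edgesAt_symmDiff] at h1
          exact symmDiff_eq_bot.mp h1
        refine ⟨V ∆ Zp, toggle V hVk hloc, ?_, ?_⟩
        · rw [symmDiff_right_comm]
          intro f hf
          rw [Finset.mem_symmDiff] at hf
          rcases hf with ⟨h, _⟩ | ⟨h, _⟩
          · exact Finset.sdiff_subset (hVsub h)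
          · exact hZpZ h
        · rw [rest_symmDiff hVk.1 hZpG, restZp, ← hc, hVrest,
            symmDiff_right_comm, symmDiff_symmDiff_cancel_right]

/-- Any two elements of a Kekulé cell differ by a set of disjoint
channels, with all intermediate combinations also in the cell. -/
theorem statement5 (P : Finset Node) (K : Set (Finset Node))
    (hK : IsKekuleCell P K) (g g' : Finset Node) (hg : g ∈ K) (hg' : g' ∈ K) :
    Even (hdist g g') ∧
    ∃ D : Finset (Finset Node),
      (∀ c ∈ D, IsChannel P c) ∧
      (D : Set (Finset Node)).Pairwise Disjoint ∧
      g' = g ∆ xorSum D ∧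
      hdist g g' = 2 * D.card ∧
      ∀ D' ⊆ D, g ∆ xorSum D' ∈ K := by
  obtain ⟨G, hG, hPG, hKP⟩ := hK
  rw [← hKP] at hg hg'
  obtain ⟨W, hW, hWg⟩ := hg
  obtain ⟨W', hW', hW'g⟩ := hg'
  obtain ⟨D, hchan, hpd, hsum, hcard, hsub⟩ :=
    main (W ∆ W').card G W W' hG hW hW' le_rfl
  rw [hWg] at hchan hsum hcard hsub
  rw [hW'g] at hchan hsum hcard
  have hdc : hdist g g' = 2 * D.card := hcard
  have hggP : g ∆ g' ⊆ P := by
    rw [← hWg, ← hW'g, ← hPG]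
    exact Finset.Subset.trans symmDiff_subset_union'
      (Finset.union_subset (rest_subset _ _) (rest_subset _ _))
  refine ⟨⟨D.card, by omega⟩, D, ?_, hpd, hsum, hdc, ?_⟩
  · intro c hc
    exact ⟨Finset.Subset.trans (hchan c hc).1 hggP, (hchan c hc).2⟩
  · intro D' hD'
    obtain ⟨V, hVk, _, hVrest⟩ := hsub D' hD'
    rw [← hKP]
    exact ⟨V, hVk, hVrest⟩
end Kekule
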